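/- For A_n and 1 ≤ i ≤ j ≤ n, the generalized Demazure operator D_{i,j} := Σ_{k=i}^{j-1} (r_j r_{j-1} ⋯ r_{k+1}) d_k + d_j + 1 equals s_{i,j} G_i + Σ_{k=i+1}^{j} s_{k,j} G_{k-1} G_k G_{k-1,k}^{-1} + G_j, where s_{k,j} := r_j r_{j-1} ⋯ r_k, d_k := D_k - 1 is the modified Demazure operator, G_k multiplication by (1 - e^{-α_k})^{-1}, and G_{k-1,k} multiplication by (1 - e^{-α_{k-1} - α_k})^{-1}. -/

import Mathlib

/-- The Demazure operator `D(f) = (f - a * r(f)) / (1 - a)`, `a = e^{-α_k}`. -/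
noncomputable def demOp {K : Type*} [Field K] (a : K) (r : K → K) (f : K) : K :=
  (f - a * r f) / (1 - a)

/-- The modified Demazure operator `d_k := D_k - 1`. -/
noncomputable def modDemOp {K : Type*} [Field K] (a : K) (r : K → K) (f : K) : K :=
  demOp a r f - f

/-- `s_{i,j} := r_j r_{j-1} ⋯ r_i` as an operator (rightmost factor `r_i`
acting first); `seqComp R i j = R j ∘ R (j-1) ∘ ⋯ ∘ R i`. -/
def seqComp {K : Type*} (R : ℕ → K → K) (i j : ℕ) : K → K :=
  ((List.range' i (j + 1 - i)).map R).foldl (fun g h => h ∘ g) id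

/-- The generalized Demazure operator
`D_{i,j} := Σ_{k=i}^{j-1} (r_j ⋯ r_{k+1}) d_k + d_j + 1`. -/
noncomputable def genDemOp {K : Type*} [Field K]
    (A : ℕ → K) (R : ℕ → K → K) (i j : ℕ) (f : K) : K :=
  (∑ k ∈ Finset.Ico i j, seqComp R (k + 1) j (modDemOp (A k) (R k) f)) +
    modDemOp (A j) (R j) f + f

private lemma foldl_comp_aux {K : Type*} (l : List (K → K)) (g : K → K) :
    l.foldl (fun g h => h ∘ g) g = (l.foldl (fun g h => h ∘ g) id) ∘ g := by
  induction l generalizing g with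
  | nil => rfl
  | cons a l ih =>
    simp only [List.foldl_cons]
    rw [ih (a ∘ g), ih (a ∘ id)]
    rfl

private lemma foldl_trans_coe {K : Type*} [Field K] (l : List (K ≃+* K)) (g : K ≃+* K) :
    ⇑(l.foldl (fun g h => g.trans h) g) =
      (l.map (fun h => DFunLike.coe h)).foldl (fun g h => h ∘ g) ⇑g := by
  induction l generalizing g with
  | nil => rfl
  | cons a l ih =>
    simp only [List.foldl_cons, List.map_cons, ih (g.trans a), RingEquiv.coe_trans]

private lemma seqComp_eq_equiv {K : Type*} [Field K] (R : ℕ → K ≃+* K) (i j : ℕ) :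
    seqComp (fun k => ⇑(R k)) i j =
      ⇑(((List.range' i (j + 1 - i)).map R).foldl (fun g h => g.trans h) (RingEquiv.refl K)) := by
  rw [foldl_trans_coe]
  simp [seqComp, List.map_map, Function.comp_def]

private lemma seqComp_triv {K : Type*} (R : ℕ → K → K) (i j : ℕ) (h : j < i) :
    seqComp R i j = id := by
  unfold seqComp
  rw [show j + 1 - i = 0 by omega]
  rfl

private lemma seqComp_succ {K : Type*} (R : ℕ → K → K) (i j : ℕ) (h : i ≤ j) (x : K) :
    seqComp R i j x = seqComp R (i + 1) j (R i x) := by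
  unfold seqComp
  rw [show j + 1 - i = (j + 1 - (i + 1)) + 1 by omega, List.range'_succ,
    List.map_cons, List.foldl_cons, foldl_comp_aux]
  rfl

private lemma demKey {K : Type*} [Field K] (a b f rf : K)
    (ha : a ≠ 1) (hb : b ≠ 1) (hab : a * b = 1) :
    (f - a * rf) / (1 - a) - f = (1 - a)⁻¹ * f - f + (1 - b)⁻¹ * rf := by
  have ha' : 1 - a ≠ 0 := sub_ne_zero.mpr (Ne.symm ha)
  have hb' : 1 - b ≠ 0 := sub_ne_zero.mpr (Ne.symm hb)
  field_simp
  ring_nf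
  linear_combination rf * hab

private lemma preKey {K : Type*} [Field K] (a b f : K) (ha : a ≠ 1) (hb : b ≠ 1) :
    (1 - a)⁻¹ * ((1 - b)⁻¹ * ((1 - a * b) * f)) = (1 - a)⁻¹ * f + (1 - b)⁻¹ * f - f := by
  have ha' : 1 - a ≠ 0 := sub_ne_zero.mpr (Ne.symm ha)
  have hb' : 1 - b ≠ 0 := sub_ne_zero.mpr (Ne.symm hb)
  field_simp
  ring

/-- For `A_n` and `1 ≤ i ≤ j ≤ n`, the generalized Demazure operator satisfies
`D_{i,j} = s_{i,j} G_i + Σ_{k=i+1}^{j} s_{k,j} G_{k-1} G_k G_{k-1,k}⁻¹ + G_j`.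
Here `e` is the formal exponential on the weight lattice `P` of `A_n`, with
simple roots `α 1, …, α n` (linearly independent), `ρ k` the simple reflection
on `P`, and `R k` the induced field automorphism. -/
theorem genDemOp_eq {P K : Type*} [AddCommGroup P] [Field K]
    (n : ℕ) (hn : 1 ≤ n)
    (e : P → K) (he0 : e 0 = 1) (hadd : ∀ μ ν : P, e (μ + ν) = e μ * e ν)
    (hne : ∀ μ : P, μ ≠ 0 → e μ ≠ 1)
    (α : ℕ → P) (ρ : ℕ → P →+ P)
    (hli : ∀ c : ℕ → ℤ, (∑ k ∈ Finset.Icc 1 n, c k • α k) = 0 →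
      ∀ k ∈ Finset.Icc 1 n, c k = 0)
    (hρself : ∀ k, 1 ≤ k → k ≤ n → ρ k (α k) = -(α k))
    (hρsucc : ∀ k, 1 ≤ k → k + 1 ≤ n → ρ k (α (k + 1)) = α k + α (k + 1))
    (hρpred : ∀ k, 2 ≤ k → k ≤ n → ρ k (α (k - 1)) = α (k - 1) + α k)
    (hρfar : ∀ k m, 1 ≤ k → k ≤ n → 1 ≤ m → m ≤ n →
      (k + 1 < m ∨ m + 1 < k) → ρ k (α m) = α m)
    (R : ℕ → K ≃+* K) (hR : ∀ k, 1 ≤ k → k ≤ n → ∀ μ : P, R k (e μ) = e (ρ k μ))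
    (i j : ℕ) (hi : 1 ≤ i) (hij : i ≤ j) (hj : j ≤ n) (f : K) :
    genDemOp (fun k => e (-α k)) (fun k => ⇑(R k)) i j f =
      seqComp (fun k => ⇑(R k)) i j ((1 - e (-α i))⁻¹ * f) +
        (∑ k ∈ Finset.Icc (i + 1) j,
          seqComp (fun k => ⇑(R k)) k j
            ((1 - e (-α (k - 1)))⁻¹ * ((1 - e (-α k))⁻¹ *
              ((1 - e (-(α (k - 1) + α k))) * f)))) +
        (1 - e (-α j))⁻¹ * f := by
  -- basic nonvanishing facts
  have hα : ∀ k, 1 ≤ k → k ≤ n → α k ≠ 0 := by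
    intro k h1 h2 h0
    have hmem : k ∈ Finset.Icc 1 n := Finset.mem_Icc.mpr ⟨h1, h2⟩
    have hsum : (∑ m ∈ Finset.Icc 1 n, (if m = k then (1 : ℤ) else 0) • α m) = 0 := by
      rw [Finset.sum_eq_single k (fun m _ hm => by simp [hm]) (fun hk => absurd hmem hk)]
      simp [h0]
    have := hli _ hsum k hmem
    simp at this
  have ha1 : ∀ k, 1 ≤ k → k ≤ n → e (-α k) ≠ 1 := fun k h1 h2 =>
    hne _ (neg_ne_zero.mpr (hα k h1 h2))
  have hb1 : ∀ k, 1 ≤ k → k ≤ n → e (α k) ≠ 1 := fun k h1 h2 => hne _ (hα k h1 h2)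
  -- the composed field automorphisms
  set E : ℕ → K ≃+* K := fun k =>
    ((List.range' k (j + 1 - k)).map R).foldl (fun g h => g.trans h) (RingEquiv.refl K) with hEdef
  have hE : ∀ k, seqComp (fun k => ⇑(R k)) k j = ⇑(E k) := fun k => seqComp_eq_equiv R k j
  have hEstep : ∀ k, k ≤ j → ∀ x : K, E k x = E (k + 1) (R k x) := by
    intro k hk x
    rw [← congrFun (hE k) x, ← congrFun (hE (k + 1)) (R k x), seqComp_succ _ _ _ hk]
  have hEj : ∀ x : K, E j x = R j x := by
    intro x
    rw [← congrFun (hE j) x, seqComp_succ _ _ _ (le_refl j),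
      seqComp_triv _ _ _ (Nat.lt_succ_self j)]
    rfl
  -- the modified Demazure operator
  have hmod : ∀ k, 1 ≤ k → k ≤ n →
      modDemOp (e (-α k)) (⇑(R k)) f
        = (1 - e (-α k))⁻¹ * f - f + R k ((1 - e (-α k))⁻¹ * f) := by
    intro k h1 h2
    have hab : e (-α k) * e (α k) = 1 := by rw [← hadd, neg_add_cancel, he0]
    have hRk : R k ((1 - e (-α k))⁻¹ * f) = (1 - e (α k))⁻¹ * R k f := by
      rw [map_mul, map_inv₀, map_sub, map_one, hR k h1 h2, map_neg, hρself k h1 h2, neg_neg]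
    rw [hRk]
    exact demKey _ _ f (R k f) (ha1 k h1 h2) (hb1 k h1 h2) hab
  -- the product of geometric factors
  have hpre : ∀ k, i + 1 ≤ k → k ≤ j →
      (1 - e (-α (k - 1)))⁻¹ * ((1 - e (-α k))⁻¹ * ((1 - e (-(α (k - 1) + α k))) * f))
        = (1 - e (-α (k - 1)))⁻¹ * f + (1 - e (-α k))⁻¹ * f - f := by
    intro k hk1 hk2
    have hmul : e (-(α (k - 1) + α k)) = e (-α (k - 1)) * e (-α k) := by
      rw [neg_add, hadd]
    rw [hmul]
    exact preKey _ _ f (ha1 (k - 1) (by omega) (by omega)) (ha1 k (by omega) (by omega))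
  -- rewrite the left-hand side termwise
  simp only [genDemOp]
  rw [← Finset.Ico_add_one_right_eq_Icc]
  have hLsum : (∑ k ∈ Finset.Ico i j,
        seqComp (fun k => ⇑(R k)) (k + 1) j (modDemOp (e (-α k)) (⇑(R k)) f))
      = ∑ k ∈ Finset.Ico i j,
          ((E (k + 1) ((1 - e (-α k))⁻¹ * f) - E (k + 1) f) + E k ((1 - e (-α k))⁻¹ * f)) := by
    refine Finset.sum_congr rfl fun k hk => ?_
    obtain ⟨hk1, hk2⟩ := Finset.mem_Ico.mp hk
    rw [hE (k + 1), hmod k (le_trans hi hk1) (by omega), map_add, map_sub,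
      ← hEstep k (by omega) ((1 - e (-α k))⁻¹ * f)]
  have hRsum : (∑ k ∈ Finset.Ico (i + 1) (j + 1),
        seqComp (fun k => ⇑(R k)) k j
          ((1 - e (-α (k - 1)))⁻¹ * ((1 - e (-α k))⁻¹ * ((1 - e (-(α (k - 1) + α k))) * f))))
      = ∑ k ∈ Finset.Ico (i + 1) (j + 1),
          ((E k ((1 - e (-α (k - 1)))⁻¹ * f) - E k f) + E k ((1 - e (-α k))⁻¹ * f)) := by
    refine Finset.sum_congr rfl fun k hk => ?_
    obtain ⟨hk1, hk2⟩ := Finset.mem_Ico.mp hk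
    rw [hE k, hpre k hk1 (by omega), map_sub, map_add]
    ring
  rw [hLsum, hRsum, hE i, hmod j (le_trans hi hij) hj]
  rw [show R j ((1 - e (-α j))⁻¹ * f) = E j ((1 - e (-α j))⁻¹ * f) from (hEj _).symm]
  rw [Finset.sum_add_distrib, Finset.sum_add_distrib]
  have hre : (∑ k ∈ Finset.Ico i j, (E (k + 1) ((1 - e (-α k))⁻¹ * f) - E (k + 1) f))
      = ∑ k ∈ Finset.Ico (i + 1) (j + 1), (E k ((1 - e (-α (k - 1)))⁻¹ * f) - E k f) := by
    have h := Finset.sum_Ico_add' (fun m => E m ((1 - e (-α (m - 1)))⁻¹ * f) - E m f) i j 1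
    simpa using h
  have hsplit : (∑ k ∈ Finset.Ico i j, E k ((1 - e (-α k))⁻¹ * f))
        + E j ((1 - e (-α j))⁻¹ * f)
      = E i ((1 - e (-α i))⁻¹ * f)
        + ∑ k ∈ Finset.Ico (i + 1) (j + 1), E k ((1 - e (-α k))⁻¹ * f) := by
    rw [← Finset.sum_Ico_succ_top hij (fun k => E k ((1 - e (-α k))⁻¹ * f)),
      Finset.sum_eq_sum_Ico_succ_bot (Nat.lt_succ_of_le hij)]
  linear_combination hre + hsplit
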